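/- For the 1/(3m+1)(1,1,1,3m-2) model with m ≥ 1, the lattice points in the interior of the tetrahedron with vertices v_1 = (3m+1,-1,-1,-(3m-2)), v_2 = (0,1,0,0), v_3 = (0,0,1,0), v_4 = (0,0,0,1) in Z^4 are exactly the m points w_i = (i,0,0,-(i-1)) for 1 ≤ i ≤ m. -/

import Mathlib

/-- Coercion of an integer lattice point to real coordinates. -/
def ic (x : Fin 4 → ℤ) : Fin 4 → ℝ := fun i => (x i : ℝ)

lemma key_int (M a b c d : ℤ) (hM : 4 ≤ M)
    (h1 : 0 ≤ a) (h2 : 0 ≤ M * b + a) (h3 : 0 ≤ M * c + a)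
    (h4 : 0 ≤ M * d + (M - 3) * a) (hs : a + b + c + d = 1) :
    (a = M ∧ b = -1 ∧ c = -1 ∧ d = -(M - 3)) ∨ (a = 0 ∧ b = 1 ∧ c = 0 ∧ d = 0) ∨
    (a = 0 ∧ b = 0 ∧ c = 1 ∧ d = 0) ∨ (a = 0 ∧ b = 0 ∧ c = 0 ∧ d = 1) ∨
    (1 ≤ a ∧ 3 * a ≤ M ∧ b = 0 ∧ c = 0 ∧ d = 1 - a) := by
  have hMs : M * (a + b + c + d) = M := by rw [hs]; ring
  have ha' : a ≤ M := by nlinarith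
  rcases eq_or_lt_of_le h1 with ha0 | ha1
  · have hb : 0 ≤ b := by nlinarith
    have hc : 0 ≤ c := by nlinarith
    have hd : 0 ≤ d := by nlinarith
    omega
  · by_cases hb : 0 ≤ b
    · by_cases hc : 0 ≤ c
      · have h4' : 3 * a + M * b + M * c ≤ M := by nlinarith
        have hb0 : b = 0 := by
          by_contra h
          have hb1 : 1 ≤ b := by omega
          nlinarith
        have hc0 : c = 0 := by
          by_contra h
          have hc1 : 1 ≤ c := by omega
          nlinarith
        right; right; right; right
        refine ⟨by omega, by nlinarith, hb0, hc0, by omega⟩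
      · push_neg at hc
        have hc1 : c ≤ -1 := by omega
        have haM : a = M := by nlinarith
        have hd1 : -(M - 3) ≤ d := by nlinarith
        have hcm : -1 ≤ c := by nlinarith
        omega
    · push_neg at hb
      have hb1 : b ≤ -1 := by omega
      have haM : a = M := by nlinarith
      have hbm : -1 ≤ b := by nlinarith
      have hb' : b = -1 := by omega
      have hcm : -1 ≤ c := by nlinarith
      have hd1 : -(M - 3) ≤ d := by nlinarith
      left
      refine ⟨haM, hb', by omega, by omega⟩

theorem lattice_points_of_tetrahedron_A_series (m : ℤ) (hm : 1 ≤ m)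
    (v₁ v₂ v₃ v₄ : Fin 4 → ℤ)
    (hv₁ : v₁ = ![3 * m + 1, -1, -1, -(3 * m - 2)])
    (hv₂ : v₂ = ![0, 1, 0, 0]) (hv₃ : v₃ = ![0, 0, 1, 0]) (hv₄ : v₄ = ![0, 0, 0, 1])
    (w : ℤ → (Fin 4 → ℤ)) (hw : ∀ i, w i = ![i, 0, 0, -(i - 1)]) :
    ∀ x : Fin 4 → ℤ,
      (ic x ∈ convexHull ℝ ({ic v₁, ic v₂, ic v₃, ic v₄} : Set (Fin 4 → ℝ)) ∧
        x ≠ v₁ ∧ x ≠ v₂ ∧ x ≠ v₃ ∧ x ≠ v₄) ↔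
      ∃ i : ℤ, 1 ≤ i ∧ i ≤ m ∧ x = w i := by
  intro x
  have hmr : (1 : ℝ) ≤ (m : ℝ) := by exact_mod_cast hm
  have icv₁ : ic v₁ = ![3 * (m : ℝ) + 1, -1, -1, -(3 * (m : ℝ) - 2)] := by
    funext k; fin_cases k <;> (simp [ic, hv₁]; try push_cast; try ring)
  have icv₂ : ic v₂ = ![0, 1, 0, 0] := by
    funext k; fin_cases k <;> simp [ic, hv₂]
  have icv₃ : ic v₃ = ![0, 0, 1, 0] := by
    funext k; fin_cases k <;> simp [ic, hv₃]
  have icv₄ : ic v₄ = ![0, 0, 0, 1] := by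
    funext k; fin_cases k <;> simp [ic, hv₄]
  set t : Set (Fin 4 → ℝ) :=
    {y | 0 ≤ y 0 ∧ 0 ≤ (3 * (m : ℝ) + 1) * y 1 + y 0 ∧ 0 ≤ (3 * (m : ℝ) + 1) * y 2 + y 0 ∧
      0 ≤ (3 * (m : ℝ) + 1) * y 3 + (3 * (m : ℝ) - 2) * y 0 ∧ y 0 + y 1 + y 2 + y 3 = 1}
    with ht
  constructor
  · rintro ⟨hx, hx1, hx2, hx3, hx4⟩
    have hconv : Convex ℝ t := by
      intro p hp q hq a b ha hb hab
      simp only [ht, Set.mem_setOf_eq] at hp hq ⊢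
      obtain ⟨p1, p2, p3, p4, p5⟩ := hp
      obtain ⟨q1, q2, q3, q4, q5⟩ := hq
      simp only [Pi.add_apply, Pi.smul_apply, smul_eq_mul]
      refine ⟨by nlinarith, by nlinarith [mul_nonneg ha p2, mul_nonneg hb q2],
        by nlinarith [mul_nonneg ha p3, mul_nonneg hb q3],
        by nlinarith [mul_nonneg ha p4, mul_nonneg hb q4],
        by linear_combination a * p5 + b * q5 + hab⟩
    have hsub : ({ic v₁, ic v₂, ic v₃, ic v₄} : Set (Fin 4 → ℝ)) ⊆ t := by
      rintro y (rfl | rfl | rfl | rfl)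
      · rw [icv₁]
        refine ⟨by norm_num [Matrix.cons_val_two, Matrix.cons_val_three] <;> nlinarith, by norm_num [Matrix.cons_val_two, Matrix.cons_val_three] <;> nlinarith, by norm_num [Matrix.cons_val_two, Matrix.cons_val_three] <;> nlinarith,
          by norm_num [Matrix.cons_val_two, Matrix.cons_val_three] <;> nlinarith, by norm_num [Matrix.cons_val_two, Matrix.cons_val_three]; ring⟩
      · rw [icv₂]
        refine ⟨by norm_num [Matrix.cons_val_two, Matrix.cons_val_three], by norm_num [Matrix.cons_val_two, Matrix.cons_val_three] <;> nlinarith, by norm_num [Matrix.cons_val_two, Matrix.cons_val_three], by norm_num [Matrix.cons_val_two, Matrix.cons_val_three], by norm_num [Matrix.cons_val_two, Matrix.cons_val_three]⟩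
      · rw [icv₃]
        refine ⟨by norm_num [Matrix.cons_val_two, Matrix.cons_val_three], by norm_num [Matrix.cons_val_two, Matrix.cons_val_three], by norm_num [Matrix.cons_val_two, Matrix.cons_val_three] <;> nlinarith, by norm_num [Matrix.cons_val_two, Matrix.cons_val_three], by norm_num [Matrix.cons_val_two, Matrix.cons_val_three]⟩
      · rw [icv₄]
        refine ⟨by norm_num [Matrix.cons_val_two, Matrix.cons_val_three], by norm_num [Matrix.cons_val_two, Matrix.cons_val_three], by norm_num [Matrix.cons_val_two, Matrix.cons_val_three], by norm_num [Matrix.cons_val_two, Matrix.cons_val_three] <;> nlinarith, by norm_num [Matrix.cons_val_two, Matrix.cons_val_three]⟩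
    have hxt := convexHull_min hsub hconv hx
    simp only [ht, Set.mem_setOf_eq, ic] at hxt
    obtain ⟨p1, p2, p3, p4, p5⟩ := hxt
    have i1 : (0 : ℤ) ≤ x 0 := by exact_mod_cast p1
    have i2 : (0 : ℤ) ≤ (3 * m + 1) * x 1 + x 0 := by exact_mod_cast p2
    have i3 : (0 : ℤ) ≤ (3 * m + 1) * x 2 + x 0 := by exact_mod_cast p3
    have i4 : (0 : ℤ) ≤ (3 * m + 1) * x 3 + (3 * m + 1 - 3) * x 0 := by
      have h' : (0 : ℤ) ≤ (3 * m + 1) * x 3 + (3 * m - 2) * x 0 := by exact_mod_cast p4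
      linarith
    have i5 : x 0 + x 1 + x 2 + x 3 = 1 := by exact_mod_cast p5
    have hkey := key_int (3 * m + 1) (x 0) (x 1) (x 2) (x 3) (by omega) i1 i2 i3 i4 i5
    rcases hkey with ⟨e1, e2, e3, e4⟩ | ⟨e1, e2, e3, e4⟩ | ⟨e1, e2, e3, e4⟩ |
      ⟨e1, e2, e3, e4⟩ | ⟨e1, e2, e3, e4, e5⟩
    · exact absurd (funext fun j => by fin_cases j <;> simp [hv₁] <;> omega) hx1
    · exact absurd (funext fun j => by fin_cases j <;> simp [hv₂] <;> omega) hx2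
    · exact absurd (funext fun j => by fin_cases j <;> simp [hv₃] <;> omega) hx3
    · exact absurd (funext fun j => by fin_cases j <;> simp [hv₄] <;> omega) hx4
    · exact ⟨x 0, e1, by omega, funext fun j => by fin_cases j <;> simp [hw] <;> omega⟩
  · rintro ⟨i, hi1, hi2, rfl⟩
    have hir : (1 : ℝ) ≤ (i : ℝ) := by exact_mod_cast hi1
    have him : (i : ℝ) ≤ (m : ℝ) := by exact_mod_cast hi2
    have hM0 : (0 : ℝ) < 3 * (m : ℝ) + 1 := by linarith
    have hMne : (3 * (m : ℝ) + 1) ≠ 0 := ne_of_gt hM0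
    refine ⟨?_, ?_, ?_, ?_, ?_⟩
    · set s : Set (Fin 4 → ℝ) := {ic v₁, ic v₂, ic v₃, ic v₄} with hs
      have hmem := (convex_convexHull ℝ s).sum_mem (t := (Finset.univ : Finset (Fin 4)))
        (w := ![(i : ℝ) / (3 * m + 1), (i : ℝ) / (3 * m + 1), (i : ℝ) / (3 * m + 1),
          (3 * (m : ℝ) + 1 - 3 * i) / (3 * m + 1)])
        (z := ![ic v₁, ic v₂, ic v₃, ic v₄])
        (fun j _ => by
          fin_cases j <;>
            (simp; exact div_nonneg (by linarith) (by linarith)))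
        (by
          simp [Fin.sum_univ_four]
          field_simp
          ring)
        (fun j _ => subset_convexHull ℝ s (by fin_cases j <;> simp [hs]))
      have heq : ic (w i) = ∑ j : Fin 4,
          ![(i : ℝ) / (3 * m + 1), (i : ℝ) / (3 * m + 1), (i : ℝ) / (3 * m + 1),
            (3 * (m : ℝ) + 1 - 3 * i) / (3 * m + 1)] j • ![ic v₁, ic v₂, ic v₃, ic v₄] j := by
        funext k
        rw [Finset.sum_apply]
        rw [icv₁, icv₂, icv₃, icv₄, hw]
        fin_cases k <;>
          (simp [Fin.sum_univ_four, ic, Matrix.vecHead, Matrix.vecTail];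
            try push_cast; try field_simp; try ring)
      rw [heq]
      exact hmem
    · intro h
      rw [hw, hv₁] at h
      have h1 := congrFun h 1
      simp at h1
    · intro h
      rw [hw, hv₂] at h
      have h1 := congrFun h 1
      simp at h1
    · intro h
      rw [hw, hv₃] at h
      have h1 := congrFun h 2
      simp at h1
    · intro h
      rw [hw, hv₄] at h
      have h1 := congrFun h 0
      simp at h1
      omega
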